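/- For a quasi-choice correspondence c over a finite set X, the following are equivalent: (i) c satisfies Axiom α; (ii) c is s-majoritarian for some real share s ∈ [0,1); (iii) c is s-majoritarian for every real share s ∈ [0,1). -/
import Mathlib


/-- `r` rationalizes the quasi-choice `c`: `c A` is the set of `r`-maximal elements of `A`. -/
def Rationalizes {X : Type*} (r : X → X → Prop) (c : Set X → Set X) : Prop :=
  ∀ A : Set X, c A = {a ∈ A | ∀ b ∈ A, ¬ r b a}

/-- `c` is freely rationalizable (a ballot): rationalized by an arbitrary binary relation. -/
def FreelyRat {X : Type*} (c : Set X → Set X) : Prop :=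
  ∃ r : X → X → Prop, Rationalizes r c

/-- `c` is asymmetrically rationalizable. -/
def AsymRat {X : Type*} (c : Set X → Set X) : Prop :=
  ∃ r : X → X → Prop, (∀ a b, r a b → ¬ r b a) ∧ Rationalizes r c

/-- Contractiveness: `c` is a quasi-choice. -/
def IsQuasiChoice {X : Type*} (c : Set X → Set X) : Prop :=
  ∀ A : Set X, c A ⊆ A

/-- Axiom α (Chernoff, Standard Contraction Consistency). -/
def AxiomAlpha {X : Type*} (c : Set X → Set X) : Prop :=
  ∀ ⦃A B : Set X⦄ ⦃x : X⦄, A ⊆ B → x ∈ A → x ∈ c B → x ∈ c A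

/-- Axiom γ (Standard Expansion Consistency). -/
def AxiomGamma {X : Type*} (c : Set X → Set X) : Prop :=
  ∀ ⦃A B : Set X⦄ ⦃x : X⦄, x ∈ c A → x ∈ c B → x ∈ c (A ∪ B)

/-- A liberal representation of `c` by the family of ballots `v`. -/
def IsLiberalRep {X : Type*} (c : Set X → Set X) {k : ℕ} (v : Fin k → Set X → Set X) : Prop :=
  (∀ i, FreelyRat (v i)) ∧
    ∀ A : Set X, ∀ x ∈ A, (x ∈ c A ↔ ∃ i, x ∈ v i A)

/-- A democratic representation of `c` by the family of ballots `v`: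
an item is chosen iff more than half of the ballots endorse it. -/
def IsDemRep {X : Type*} (c : Set X → Set X) {k : ℕ} (v : Fin k → Set X → Set X) : Prop :=
  (∀ i, FreelyRat (v i)) ∧
    ∀ A : Set X, ∀ x ∈ A, (x ∈ c A ↔ 2 * Nat.card {i : Fin k // x ∈ v i A} > k)

/-- The liberal number of `c`: the minimum size of a liberal representation (⊤ if none). -/
noncomputable def lib {X : Type*} (c : Set X → Set X) : ℕ∞ :=
  sInf {n : ℕ∞ | ∃ (k : ℕ) (v : Fin k → Set X → Set X), 0 < k ∧ IsLiberalRep c v ∧ n = (k : ℕ∞)}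

/-- The democratic number of `c`: the minimum size of a democratic representation (⊤ if none). -/
noncomputable def dem {X : Type*} (c : Set X → Set X) : ℕ∞ :=
  sInf {n : ℕ∞ | ∃ (k : ℕ) (v : Fin k → Set X → Set X), 0 < k ∧ IsDemRep c v ∧ n = (k : ℕ∞)}

/-- `c` is `s`-majoritarian: some finite family of ballots selects exactly the items
endorsed by a share of ballots strictly larger than `s`. -/
def Majoritarian {X : Type*} (s : ℝ) (c : Set X → Set X) : Prop :=
  ∃ (k : ℕ) (v : Fin k → Set X → Set X), 0 < k ∧ (∀ i, FreelyRat (v i)) ∧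
    ∀ A : Set X, ∀ x ∈ A,
      (x ∈ c A ↔ (Nat.card {i : Fin k // x ∈ v i A} : ℝ) / (k : ℝ) > s)

namespace Stmt9Aux

variable {X : Type*}

/-- The ballot associated to a pair `(B, y)`: selects `y` on menus `A ⊆ B` containing `y`. -/
def ballotOf (p : Set X × X) : Set X → Set X :=
  fun A => {a ∈ A | a = p.2 ∧ A ⊆ p.1}

lemma freelyRat_ballotOf (p : Set X × X) : FreelyRat (ballotOf p) := by
  refine ⟨fun b a => ¬(a = p.2 ∧ b ∈ p.1), fun A => ?_⟩
  ext a
  simp only [ballotOf, Set.mem_setOf_eq, not_not]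
  constructor
  · rintro ⟨ha, rfl, hsub⟩
    exact ⟨ha, fun b hb => ⟨rfl, hsub hb⟩⟩
  · rintro ⟨ha, h⟩
    exact ⟨ha, (h a ha).1, fun b hb => (h b hb).2⟩

lemma freelyRat_id : FreelyRat (fun A : Set X => A) := by
  refine ⟨fun _ _ => False, fun A => ?_⟩
  ext a; simp

lemma freelyRat_empty : FreelyRat (fun _ : Set X => (∅ : Set X)) := by
  refine ⟨fun _ _ => True, fun A => ?_⟩
  ext a
  simp only [Set.mem_empty_iff_false, Set.mem_setOf_eq, not_true, false_iff, not_and]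
  intro ha h
  exact h a ha

lemma maj_to_alpha {c : Set X → Set X} {s : ℝ} (hs : Majoritarian s c) :
    AxiomAlpha c := by
  obtain ⟨k, v, hk, hfree, hiff⟩ := hs
  intro A B x hAB hxA hxB
  rw [hiff A x hxA]
  have hxB' := (hiff B x (hAB hxA)).mp hxB
  refine lt_of_lt_of_le hxB' ?_
  have hkR : (0 : ℝ) < (k : ℝ) := by exact_mod_cast hk
  rw [div_le_div_iff_of_pos_right hkR]
  have hinj : Function.Injective
      (fun z : {i : Fin k // x ∈ v i B} =>
        (⟨z.1, by
          obtain ⟨r, hr⟩ := hfree z.1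
          have hz := z.2
          rw [hr B] at hz
          rw [hr A]
          exact ⟨hxA, fun b hb => hz.2 b (hAB hb)⟩⟩ : {i : Fin k // x ∈ v i A})) := by
    intro a b h
    apply Subtype.ext
    have := congrArg Subtype.val h
    simpa using this
  exact_mod_cast Nat.card_le_card_of_injective _ hinj

open Classical in
noncomputable def Bal (c : Set X → Set X) (p : Set X × X) : Set X → Set X :=
  if p.2 ∈ c p.1 then ballotOf p else fun _ => ∅

lemma freelyRat_Bal (c : Set X → Set X) (p : Set X × X) : FreelyRat (Bal c p) := by
  unfold Bal
  split_ifs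
  · exact freelyRat_ballotOf _
  · exact freelyRat_empty

open Classical in
lemma alpha_to_maj [Fintype X] {c : Set X → Set X} (hc : AxiomAlpha c)
    {s : ℝ} (h0 : 0 ≤ s) (h1 : s < 1) : Majoritarian s c := by
  classical
  set m : ℕ := Nat.card (Set X × X) with hm
  let e : (Set X × X) ≃ Fin m := Finite.equivFin (Set X × X)
  set k : ℕ := ⌈((m : ℝ) + 1) / (1 - s)⌉₊ with hkdef
  have h1s : (0 : ℝ) < 1 - s := by linarith
  have hk1 : ((m : ℝ) + 1) / (1 - s) ≤ (k : ℝ) := Nat.le_ceil _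
  have hk2 : (m : ℝ) + 1 ≤ (k : ℝ) * (1 - s) := by
    rw [div_le_iff₀ h1s] at hk1; linarith
  set d : ℕ := ⌊s * (k : ℝ)⌋₊ with hddef
  have hd1 : (d : ℝ) ≤ s * (k : ℝ) := Nat.floor_le (by positivity)
  have hd2 : s * (k : ℝ) < (d : ℝ) + 1 := Nat.lt_floor_add_one _
  have hdm : d + m + 1 ≤ k := by
    have : ((d + m + 1 : ℕ) : ℝ) ≤ (k : ℝ) := by push_cast; nlinarith
    exact_mod_cast this
  have hkpos : 0 < k := by omega
  have hkR : (0 : ℝ) < (k : ℝ) := by exact_mod_cast hkpos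
  let v : Fin k → Set X → Set X := fun i =>
    if h1 : i.val < d then (fun A => A)
    else if h2 : i.val < d + m then Bal c (e.symm ⟨i.val - d, by omega⟩)
    else fun _ => ∅
  have hv1 : ∀ i : Fin k, i.val < d → v i = (fun A => A) := by
    intro i h
    show (if h1 : i.val < d then (fun A : Set X => A)
      else if h2 : i.val < d + m then Bal c (e.symm ⟨i.val - d, by omega⟩)
      else fun _ => ∅) = _
    rw [dif_pos h]
  have hv2 : ∀ (i : Fin k) (h1 : ¬ i.val < d) (h2 : i.val < d + m),
      v i = Bal c (e.symm ⟨i.val - d, by omega⟩) := by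
    intro i h1 h2
    show (if h1 : i.val < d then (fun A : Set X => A)
      else if h2 : i.val < d + m then Bal c (e.symm ⟨i.val - d, by omega⟩)
      else fun _ => ∅) = _
    rw [dif_neg h1, dif_pos h2]
  have hv3 : ∀ (i : Fin k), ¬ i.val < d + m → v i = fun _ => ∅ := by
    intro i h2
    have h1 : ¬ i.val < d := by omega
    show (if h1 : i.val < d then (fun A : Set X => A)
      else if h2 : i.val < d + m then Bal c (e.symm ⟨i.val - d, by omega⟩)
      else fun _ => ∅) = _
    rw [dif_neg h1, dif_neg h2]
  refine ⟨k, v, hkpos, ?_, ?_⟩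
  · intro i
    by_cases ha : i.val < d
    · rw [hv1 i ha]; exact freelyRat_id
    · by_cases hb : i.val < d + m
      · rw [hv2 i ha hb]; exact freelyRat_Bal _ _
      · rw [hv3 i hb]; exact freelyRat_empty
  · intro A x hxA
    by_cases hx : x ∈ c A
    · simp only [hx, true_iff, gt_iff_lt]
      have hi0lt : d + (e (A, x)).val < k := by
        have := (e (A, x)).isLt; omega
      set i0 : Fin k := ⟨d + (e (A, x)).val, hi0lt⟩ with hi0
      have hnd : ¬ i0.val < d := by simp [hi0]
      have hdm' : i0.val < d + m := by
        have := (e (A, x)).isLt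
        simp only [hi0]
        omega
      have hvi0 : x ∈ v i0 A := by
        rw [hv2 i0 hnd hdm']
        have hfin : (⟨i0.val - d, by omega⟩ : Fin m) = e (A, x) := by
          apply Fin.ext
          simp [hi0]
        rw [hfin, e.symm_apply_apply]
        unfold Bal
        rw [if_pos hx]
        exact ⟨hxA, rfl, subset_rfl⟩
      have hcard : d + 1 ≤ Nat.card {i : Fin k // x ∈ v i A} := by
        have hinj : Function.Injective
            (fun j : Fin (d + 1) =>
              if hj : j.val < d then
                (⟨⟨j.val, by omega⟩, by
                  rw [hv1 ⟨j.val, by omega⟩ hj]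
                  exact hxA⟩ : {i : Fin k // x ∈ v i A})
              else ⟨i0, hvi0⟩) := by
          intro j1 j2 hj
          have hval := congrArg (fun z : {i : Fin k // x ∈ v i A} => z.1.val) hj
          simp only at hval
          split_ifs at hval with ha hb hb
          · exact Fin.ext hval
          · exfalso; simp only [hi0] at hval; omega
          · exfalso; simp only [hi0] at hval; omega
          · have := j1.isLt; have := j2.isLt
            exact Fin.ext (by omega)
        have := Nat.card_le_card_of_injective _ hinj
        simpa using this
      rw [lt_div_iff₀ hkR]
      calc s * (k : ℝ) < (d : ℝ) + 1 := hd2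
        _ ≤ (Nat.card {i : Fin k // x ∈ v i A} : ℝ) := by exact_mod_cast hcard
    · simp only [hx, false_iff, gt_iff_lt, not_lt]
      have hall : ∀ i : Fin k, x ∈ v i A → i.val < d := by
        intro i hi
        by_contra hnot
        by_cases h2' : i.val < d + m
        · rw [hv2 i hnot h2'] at hi
          set p := e.symm (⟨i.val - d, by omega⟩ : Fin m) with hp
          unfold Bal at hi
          by_cases hpc : p.2 ∈ c p.1
          · rw [if_pos hpc] at hi
            obtain ⟨_, rfl, hsub⟩ := hi
            exact hx (hc hsub hxA hpc)
          · rw [if_neg hpc] at hi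
            exact hi
        · rw [hv3 i h2'] at hi
          exact hi
      have hcard : Nat.card {i : Fin k // x ∈ v i A} ≤ d := by
        have hinj : Function.Injective
            (fun z : {i : Fin k // x ∈ v i A} =>
              (⟨z.1.val, hall z.1 z.2⟩ : Fin d)) := by
          intro a b h
          apply Subtype.ext
          apply Fin.ext
          have := congrArg Fin.val h
          simpa using this
        have := Nat.card_le_card_of_injective _ hinj
        simpa using this
      rw [div_le_iff₀ hkR]
      calc (Nat.card {i : Fin k // x ∈ v i A} : ℝ) ≤ (d : ℝ) := by exact_mod_cast hcard
        _ ≤ s * (k : ℝ) := hd1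

end Stmt9Aux

theorem stmt9 {X : Type*} [Fintype X] (c : Set X → Set X) (hq : IsQuasiChoice c) :
    (AxiomAlpha c ↔ ∃ s : ℝ, 0 ≤ s ∧ s < 1 ∧ Majoritarian s c) ∧
    (AxiomAlpha c ↔ ∀ s : ℝ, 0 ≤ s → s < 1 → Majoritarian s c) := by
  constructor
  · constructor
    · intro h
      exact ⟨0, le_refl 0, by norm_num, Stmt9Aux.alpha_to_maj h (le_refl 0) (by norm_num)⟩
    · rintro ⟨s, _, _, hs⟩
      exact Stmt9Aux.maj_to_alpha hs
  · constructor
    · intro h s h0 h1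
      exact Stmt9Aux.alpha_to_maj h h0 h1
    · intro h
      exact Stmt9Aux.maj_to_alpha (h 0 (le_refl 0) (by norm_num))
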